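/- Let L_∞(s) = Σ_{m≥1} R_m m^{−s} be absolutely convergent for Re(s) > 1, let L₀ be a meromorphic function, and suppose L₀(−s) = −(2i·3^s/(π^{2s}·s))·(Γ((s+1)/2)²/Γ(−s/2)²)·L_∞(s) wherever defined. Set η_m := (2π/3)·i·m. Then for every odd integer n > 1, L₀(−n) = −(2i/π)·n!·(n−1)!·(−2πi)^{−n}·Σ_{m≥1} R_m/η_mⁿ, so that the coefficient c_n := L₀(−n)·(2πi)ⁿ/n! equals −(2Γ(n)/(πi))·Σ_{m≥1} R_m/η_mⁿ; and for every even integer n > 1, L₀(−n) = 0 (because Γ(−n/2)^{−2} vanishes there). -/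

import Mathlib

noncomputable section

open Complex

/-- Given the functional-equation relation
`L₀(-s) = -(2i·3^s/(π^{2s}s)) (Γ((s+1)/2)²/Γ(-s/2)²) L∞(s)` with
`L∞(s) = Σ_{m≥1} R_m m^{-s}` absolutely convergent for `Re(s) > 1`, and
`η_m = (2π/3)im`: for every odd `n > 1`,
`L₀(-n) = -(2i/π) n! (n-1)! (-2πi)^{-n} Σ_m R_m/η_mⁿ`, so that
`c_n = L₀(-n)(2πi)ⁿ/n! = -(2Γ(n)/(πi)) Σ_m R_m/η_mⁿ`; and for every even `n > 1`,
`L₀(-n) = 0`. -/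
theorem stmt19 (R : ℕ → ℂ)
    (hR : ∀ s : ℂ, 1 < s.re → Summable fun m : ℕ => ‖R (m + 1) / ((m : ℂ) + 1) ^ s‖)
    (L₀ : ℂ → ℂ)
    (hfe : ∀ s : ℂ, 1 < s.re →
      L₀ (-s) = -(2 * I * (3 : ℂ) ^ s / ((Real.pi : ℂ) ^ (2 * s) * s))
        * (Complex.Gamma ((s + 1) / 2) ^ 2 / Complex.Gamma (-s / 2) ^ 2)
        * ∑' m : ℕ, R (m + 1) / ((m : ℂ) + 1) ^ s) :
    -- odd n > 1
    (∀ n : ℕ, Odd n → 1 < n →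
      L₀ (-(n : ℂ)) = -(2 * I / (Real.pi : ℂ)) * (n.factorial : ℂ)
          * ((n - 1).factorial : ℂ) * (-2 * Real.pi * I : ℂ) ^ (-(n : ℤ))
          * ∑' m : ℕ, R (m + 1) / (2 * Real.pi / 3 * I * ((m : ℂ) + 1)) ^ n ∧
      L₀ (-(n : ℂ)) * (2 * Real.pi * I) ^ n / (n.factorial : ℂ)
        = -(2 * ((n - 1).factorial : ℂ) / (Real.pi * I))
          * ∑' m : ℕ, R (m + 1) / (2 * Real.pi / 3 * I * ((m : ℂ) + 1)) ^ n) ∧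
    (∀ n : ℕ, Even n → 1 < n → L₀ (-(n : ℂ)) = 0) := by
  have hpi : (Real.pi : ℂ) ≠ 0 := ofReal_ne_zero.mpr Real.pi_ne_zero
  constructor
  · intro n hodd hn
    obtain ⟨k, hk⟩ := hodd
    have hre : 1 < ((n : ℂ)).re := by
      simpa using (by exact_mod_cast hn : (1 : ℝ) < (n : ℝ))
    have hfe' := hfe (n : ℂ) hre
    have hncast : (n : ℂ) ≠ 0 := Nat.cast_ne_zero.mpr (by omega)
    -- the plain Dirichlet sum
    have htsum1 : (∑' m : ℕ, R (m + 1) / ((m : ℂ) + 1) ^ (n : ℂ))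
        = ∑' m : ℕ, R (m + 1) / ((m : ℂ) + 1) ^ n := by
      refine tsum_congr fun m => ?_
      rw [cpow_natCast]
    have haz : (2 * (Real.pi : ℂ) / 3 * I) ≠ 0 := by
      simp [hpi, I_ne_zero]
    have htsum2 : (∑' m : ℕ, R (m + 1) / (2 * (Real.pi : ℂ) / 3 * I * ((m : ℂ) + 1)) ^ n)
        = ((2 * (Real.pi : ℂ) / 3 * I) ^ n)⁻¹ * ∑' m : ℕ, R (m + 1) / ((m : ℂ) + 1) ^ n := by
      rw [← tsum_mul_left]
      refine tsum_congr fun m => ?_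
      have hm : ((m : ℂ) + 1) ≠ 0 := Nat.cast_add_one_ne_zero m
      rw [mul_pow]
      field_simp
    -- Gamma computation for odd n = 2k+1
    have hGnum : Complex.Gamma (((n : ℂ) + 1) / 2) = Complex.Gamma ((k : ℂ) + 1) := by
      congr 1
      push_cast [hk]; ring
    have hGden : -(n : ℂ) / 2 = -((k : ℂ) + 1 / 2) := by
      push_cast [hk]; ring
    have hsin : Complex.sin ((Real.pi : ℂ) * (-((k : ℂ) + 1 / 2)))
        = -Complex.cos ((k : ℂ) * (Real.pi : ℂ)) := by
      have h : (Real.pi : ℂ) * (-((k : ℂ) + 1 / 2))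
          = -((k : ℂ) * (Real.pi : ℂ) + (Real.pi : ℂ) / 2) := by ring
      rw [h, Complex.sin_neg, Complex.sin_add, Complex.sin_nat_mul_pi,
        Complex.sin_pi_div_two, Complex.cos_pi_div_two]
      ring
    have hcos2 : Complex.cos ((k : ℂ) * (Real.pi : ℂ)) ^ 2 = 1 := by
      have h := Complex.sin_sq_add_cos_sq ((k : ℂ) * (Real.pi : ℂ))
      rw [Complex.sin_nat_mul_pi] at h
      simpa using h
    have hzsq : Complex.Gamma (-((k : ℂ) + 1 / 2)) ^ 2
        * Complex.Gamma ((k : ℂ) + 1 + 1 / 2) ^ 2 = (Real.pi : ℂ) ^ 2 := by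
      have h := Complex.Gamma_mul_Gamma_one_sub (-((k : ℂ) + 1 / 2))
      have h1m : (1 : ℂ) - (-((k : ℂ) + 1 / 2)) = (k : ℂ) + 1 + 1 / 2 := by ring
      rw [h1m, hsin] at h
      calc Complex.Gamma (-((k : ℂ) + 1 / 2)) ^ 2 * Complex.Gamma ((k : ℂ) + 1 + 1 / 2) ^ 2
          = (Complex.Gamma (-((k : ℂ) + 1 / 2)) * Complex.Gamma ((k : ℂ) + 1 + 1 / 2)) ^ 2 := by
            ring
        _ = ((Real.pi : ℂ) / -Complex.cos ((k : ℂ) * (Real.pi : ℂ))) ^ 2 := by rw [h]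
        _ = (Real.pi : ℂ) ^ 2 / Complex.cos ((k : ℂ) * (Real.pi : ℂ)) ^ 2 := by
            rw [div_pow]
            congr 1
            ring
        _ = (Real.pi : ℂ) ^ 2 := by rw [hcos2, div_one]
    have hGhalf_ne : Complex.Gamma ((k : ℂ) + 1 + 1 / 2) ≠ 0 := by
      apply Complex.Gamma_ne_zero_of_re_pos
      have h : ((k : ℂ) + 1 + 1 / 2) = (((k : ℝ) + 3 / 2 : ℝ) : ℂ) := by push_cast; ring
      rw [h, ofReal_re]
      positivity
    have hGh2 : Complex.Gamma ((k : ℂ) + 1 + 1 / 2) ^ 2 ≠ 0 := pow_ne_zero 2 hGhalf_ne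
    have hdup := Complex.Gamma_mul_Gamma_add_half ((k : ℂ) + 1)
    have h2exp : (1 : ℂ) - 2 * ((k : ℂ) + 1) = -((n : ℕ) : ℂ) := by push_cast [hk]; ring
    have h2s : (2 : ℂ) * ((k : ℂ) + 1) = ((n : ℕ) : ℂ) + 1 := by push_cast [hk]; ring
    rw [h2exp, cpow_neg, cpow_natCast, h2s, Complex.Gamma_nat_eq_factorial n] at hdup
    have hsqrtpi : ((Real.sqrt Real.pi : ℝ) : ℂ) ^ 2 = (Real.pi : ℂ) := by
      rw [← ofReal_pow, Real.sq_sqrt Real.pi_pos.le]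
    have h4 : ((2 : ℂ) ^ n) ^ 2 = 4 ^ n := by
      rw [← pow_mul, mul_comm, pow_mul]
      norm_num
    have hsq : Complex.Gamma ((k : ℂ) + 1) ^ 2 * Complex.Gamma ((k : ℂ) + 1 + 1 / 2) ^ 2
        = (n.factorial : ℂ) ^ 2 * ((4 : ℂ) ^ n)⁻¹ * (Real.pi : ℂ) := by
      calc Complex.Gamma ((k : ℂ) + 1) ^ 2 * Complex.Gamma ((k : ℂ) + 1 + 1 / 2) ^ 2
          = (Complex.Gamma ((k : ℂ) + 1) * Complex.Gamma ((k : ℂ) + 1 + 1 / 2)) ^ 2 := by ring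
        _ = ((n.factorial : ℂ) * ((2 : ℂ) ^ n)⁻¹ * ((Real.sqrt Real.pi : ℝ) : ℂ)) ^ 2 := by
            rw [hdup]
        _ = (n.factorial : ℂ) ^ 2 * (((2 : ℂ) ^ n) ^ 2)⁻¹ * ((Real.sqrt Real.pi : ℝ) : ℂ) ^ 2 := by
            rw [mul_pow, mul_pow, inv_pow]
        _ = (n.factorial : ℂ) ^ 2 * ((4 : ℂ) ^ n)⁻¹ * (Real.pi : ℂ) := by rw [h4, hsqrtpi]
    -- the key Gamma ratio
    have hG : Complex.Gamma (((n : ℂ) + 1) / 2) ^ 2 / Complex.Gamma (-(n : ℂ) / 2) ^ 2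
        = ((n.factorial : ℂ)) ^ 2 / ((Real.pi : ℂ) * 4 ^ n) := by
      rw [hGnum, hGden]
      have hden : Complex.Gamma (-((k : ℂ) + 1 / 2)) ^ 2
          = (Real.pi : ℂ) ^ 2 / Complex.Gamma ((k : ℂ) + 1 + 1 / 2) ^ 2 := by
        rw [eq_div_iff hGh2]; exact hzsq
      have hG1 : Complex.Gamma ((k : ℂ) + 1) ^ 2
          = (n.factorial : ℂ) ^ 2 * ((4 : ℂ) ^ n)⁻¹ * (Real.pi : ℂ)
            / Complex.Gamma ((k : ℂ) + 1 + 1 / 2) ^ 2 := by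
        rw [eq_div_iff hGh2]; exact hsq
      have h4n : (4 : ℂ) ^ n ≠ 0 := pow_ne_zero n (by norm_num)
      rw [hden, hG1, div_div_div_cancel_right₀]
      · field_simp
      · exact hGh2
    -- cpow normalisations
    have h3 : (3 : ℂ) ^ ((n : ℕ) : ℂ) = (3 : ℂ) ^ n := cpow_natCast 3 n
    have hpin : (Real.pi : ℂ) ^ (2 * ((n : ℕ) : ℂ)) = ((Real.pi : ℂ) ^ 2) ^ n := by
      rw [show (2 : ℂ) * ((n : ℕ) : ℂ) = ((2 * n : ℕ) : ℂ) by push_cast; ring,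
        cpow_natCast, pow_mul]
    rw [htsum1, h3, hpin, hG] at hfe'
    -- factorial relation
    have hfact : (n : ℂ) * (((n - 1).factorial : ℕ) : ℂ) = (n.factorial : ℂ) := by
      exact_mod_cast congrArg (Nat.cast : ℕ → ℂ) (Nat.mul_factorial_pred (by omega : n ≠ 0))
    -- base product identity
    have hb : (-2 * (Real.pi : ℂ) * I) * (2 * (Real.pi : ℂ) / 3 * I) * 3
        = 4 * (Real.pi : ℂ) ^ 2 := by
      linear_combination (-(4 : ℂ) * (Real.pi : ℂ) ^ 2) * Complex.I_mul_I
    have hpow2 : (-2 * (Real.pi : ℂ) * I) ^ n * (2 * (Real.pi : ℂ) / 3 * I) ^ n * 3 ^ n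
        = 4 ^ n * ((Real.pi : ℂ) ^ 2) ^ n := by
      rw [← mul_pow, ← mul_pow, ← mul_pow, hb]
    have hmI : (-2 * (Real.pi : ℂ) * I) ≠ 0 := by simp [hpi, I_ne_zero]
    have hmIn : (-2 * (Real.pi : ℂ) * I) ^ n ≠ 0 := pow_ne_zero n hmI
    have hazn : (2 * (Real.pi : ℂ) / 3 * I) ^ n ≠ 0 := pow_ne_zero n haz
    have h4n : (4 : ℂ) ^ n ≠ 0 := pow_ne_zero n (by norm_num)
    have h3n : (3 : ℂ) ^ n ≠ 0 := pow_ne_zero n (by norm_num)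
    have hpin' : ((Real.pi : ℂ) ^ 2) ^ n ≠ 0 := pow_ne_zero n (pow_ne_zero 2 hpi)
    have hfactne : (n.factorial : ℂ) ≠ 0 := Nat.cast_ne_zero.mpr n.factorial_ne_zero
    have hzp : (-2 * (Real.pi : ℂ) * I : ℂ) ^ (-(n : ℤ)) = ((-2 * (Real.pi : ℂ) * I) ^ n)⁻¹ := by
      rw [zpow_neg, zpow_natCast]
    have hfirst : L₀ (-(n : ℂ)) = -(2 * I / (Real.pi : ℂ)) * (n.factorial : ℂ)
        * ((n - 1).factorial : ℂ) * (-2 * Real.pi * I : ℂ) ^ (-(n : ℤ))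
        * ∑' m : ℕ, R (m + 1) / (2 * Real.pi / 3 * I * ((m : ℂ) + 1)) ^ n := by
      rw [hfe', htsum2, hzp]
      have hscal : -(2 * I * (3 : ℂ) ^ n / (((Real.pi : ℂ) ^ 2) ^ n * (n : ℂ)))
          * ((n.factorial : ℂ) ^ 2 / ((Real.pi : ℂ) * 4 ^ n))
          = -(2 * I / (Real.pi : ℂ)) * (n.factorial : ℂ) * ((n - 1).factorial : ℂ)
            * ((-2 * (Real.pi : ℂ) * I) ^ n)⁻¹ * ((2 * (Real.pi : ℂ) / 3 * I) ^ n)⁻¹ := by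
        apply mul_right_cancel₀ (mul_ne_zero hmIn hazn)
        have hA : (-(2 * (Real.pi : ℂ) * I)) ^ n ≠ 0 := by
          apply pow_ne_zero; simp [hpi, I_ne_zero]
        have hB : ((2 * (Real.pi : ℂ) * I)) ^ n ≠ 0 := by
          apply pow_ne_zero; simp [hpi, I_ne_zero]
        have hkey : (-(2 * (Real.pi : ℂ) * I)) ^ n * (2 * (Real.pi : ℂ) * I) ^ n
            = 4 ^ n * ((Real.pi : ℂ) ^ 2) ^ n := by
          rw [← mul_pow, ← mul_pow]
          congr 1
          linear_combination (-(4 : ℂ) * (Real.pi : ℂ) ^ 2) * Complex.I_mul_I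
        field_simp [hA, hB]
        linear_combination (-(n.factorial : ℂ)) * hpow2 + (4 : ℂ) ^ n * ((Real.pi : ℂ) ^ 2) ^ n * hfact
      linear_combination (∑' m : ℕ, R (m + 1) / ((m : ℂ) + 1) ^ n) * hscal
    refine ⟨hfirst, ?_⟩
    rw [hfirst, htsum2, hzp]
    have hB : ((2 * (Real.pi : ℂ) * I)) ^ n ≠ 0 := by
      apply pow_ne_zero; simp [hpi, I_ne_zero]
    have hneg : (-2 * (Real.pi : ℂ) * I) ^ n = -((2 * (Real.pi : ℂ) * I) ^ n) := by
      rw [show (-2 * (Real.pi : ℂ) * I) = -(2 * (Real.pi : ℂ) * I) by ring]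
      exact Odd.neg_pow ⟨k, by omega⟩ _
    rw [hneg]
    field_simp
    linear_combination (((n - 1).factorial : ℂ) * (∑' (m : ℕ), R (m + 1) / ((m : ℂ) + 1) ^ n)) * Complex.I_mul_I
  · intro n heven hn
    obtain ⟨k, hk⟩ := heven
    have hre : 1 < ((n : ℂ)).re := by
      simpa using (by exact_mod_cast hn : (1 : ℝ) < (n : ℝ))
    have h := hfe (n : ℂ) hre
    have hz : -(n : ℂ) / 2 = -((k : ℕ) : ℂ) := by
      push_cast [hk]; ring
    rw [hz, Complex.Gamma_neg_nat_eq_zero] at h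
    simpa using h
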